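/- Let R be a commutative ring, L an R-algebra equipped with an R-algebra endomorphism F with fixed subring R (i.e. L^{F} = R), and let M be a finite free L-module with an F-semilinear endomorphism t: M → M. Suppose the matrix A of t on some L-basis satisfies A = F(X)^{-1}·X for some X ∈ GLₙ(L). Then the natural map M^{t=1} ⊗_R L → M is an isomorphism of L-modules; in particular M has an L-basis contained in the fixed set M^{t=1}. -/

import Mathlib

open scoped TensorProduct

/-- Let `L` be an algebra over a commutative ring `R`, `F` a ring endomorphism of `L` whose
fixed subring is exactly `R`, and `M` a finite free `L`-module with an `F`-semilinear
endomorphism `t` whose matrix `A` on some `L`-basis `e` satisfies the Lang equation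
`A = F(X)⁻¹·X` for some `X ∈ GLₙ(L)`. Then the natural map `L ⊗_R M^{t=1} → M`,
`λ ⊗ m ↦ λ·m`, is bijective; in particular `M` has an `L`-basis of `t`-fixed vectors. -/
theorem semilinear_fixed_points_basis {R L M : Type*} [CommRing R] [CommRing L] [Algebra R L]
    [AddCommGroup M] [Module L M] [Module R M] [IsScalarTower R L M]
    (F : L →+* L) (hfix : ∀ x : L, F x = x ↔ ∃ r : R, algebraMap R L r = x)
    (t : M →ₗ[R] M) (hsemi : ∀ (c : L) (m : M), t (c • m) = F c • t m)
    {n : ℕ} (e : Module.Basis (Fin n) L M) (A : Matrix (Fin n) (Fin n) L)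
    (hA : ∀ i, t (e i) = ∑ j, A i j • e j)
    (X : (Matrix (Fin n) (Fin n) L)ˣ)
    (hX : (X : Matrix (Fin n) (Fin n) L).map F * A = (X : Matrix (Fin n) (Fin n) L)) :
    Function.Bijective
      ((LinearMap.eqLocus t LinearMap.id).subtype.liftBaseChange L :
        L ⊗[R] (LinearMap.eqLocus t LinearMap.id) →ₗ[L] M) ∧
      ∃ b : Module.Basis (Fin n) L M, ∀ i, t (b i) = b i := by
  classical
  set N := LinearMap.eqLocus t LinearMap.id with hNdef
  -- the new basis e' i = ∑ j, X i j • e j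
  have hdet : IsUnit (((X : Matrix (Fin n) (Fin n) L).transpose).det) := by
    rw [Matrix.det_transpose]
    exact (Matrix.isUnit_iff_isUnit_det _).mp X.isUnit
  let e' : Module.Basis (Fin n) L M :=
    e.map (Matrix.toLinearEquiv e ((X : Matrix (Fin n) (Fin n) L).transpose) hdet)
  have he' : ∀ i, e' i = ∑ j, (X : Matrix (Fin n) (Fin n) L) i j • e j := by
    intro i
    simp [e', Module.Basis.map_apply, Matrix.toLinearEquiv_apply, Matrix.toLin_self,
      Matrix.transpose_apply]
  have hte' : ∀ i, t (e' i) = e' i := by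
    intro i
    rw [he' i, map_sum]
    have h1 : ∀ j, t ((X : Matrix (Fin n) (Fin n) L) i j • e j)
        = ∑ k, (F ((X : Matrix (Fin n) (Fin n) L) i j) * A j k) • e k := by
      intro j
      rw [hsemi, hA, Finset.smul_sum]
      simp [smul_smul]
    simp_rw [h1]
    rw [Finset.sum_comm]
    have h2 : ∀ k, (∑ j, (F ((X : Matrix (Fin n) (Fin n) L) i j) * A j k) • e k)
        = (((X : Matrix (Fin n) (Fin n) L).map F * A) i k) • e k := by
      intro k
      rw [← Finset.sum_smul, Matrix.mul_apply]
      simp [Matrix.map_apply]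
    simp_rw [h2, hX]
  have hmem : ∀ i, e' i ∈ N := by
    intro i
    simp only [hNdef, LinearMap.mem_eqLocus, LinearMap.id_apply]
    exact hte' i
  -- coordinates of fixed vectors are fixed by F, hence come from R
  have hrep : ∀ m : M, m ∈ N → ∀ i, ∃ r : R, algebraMap R L r = e'.repr m i := by
    intro m hm i
    rw [← hfix]
    have h1 : t m = m := hm
    have h2 : t m = ∑ j, F (e'.repr m j) • e' j := by
      conv_lhs => rw [← e'.sum_repr m]
      rw [map_sum]
      simp_rw [hsemi, hte']
    have h3 : ∑ j, F (e'.repr m j) • e' j = ∑ j, e'.repr m j • e' j := by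
      rw [← h2, h1, e'.sum_repr]
    have := e'.repr_sum_self (fun j => F (e'.repr m j))
    rw [h3, Module.Basis.repr_sum_self] at this
    exact (congrFun this i).symm
  -- the inverse map
  set φ : L ⊗[R] N →ₗ[L] M := N.subtype.liftBaseChange L with hφdef
  let ψ : M →ₗ[L] L ⊗[R] N :=
    e'.constr L (fun i => (1 : L) ⊗ₜ[R] (⟨e' i, hmem i⟩ : N))
  have hψe' : ∀ i, ψ (e' i) = (1 : L) ⊗ₜ[R] (⟨e' i, hmem i⟩ : N) := fun i =>
    e'.constr_basis L _ i
  have hψN : ∀ (m : M) (hm : m ∈ N), ψ m = (1 : L) ⊗ₜ[R] (⟨m, hm⟩ : N) := by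
    intro m hm
    choose r hr using hrep m hm
    have hm2 : m = ∑ i, r i • e' i := by
      conv_lhs => rw [← e'.sum_repr m]
      refine Finset.sum_congr rfl fun i _ => ?_
      rw [← hr i, algebraMap_smul]
    have hsum : (∑ i, r i • (⟨e' i, hmem i⟩ : N)) = (⟨m, hm⟩ : N) := by
      apply Subtype.ext
      push_cast
      rw [← hm2]
    conv_lhs => rw [hm2]
    rw [map_sum]
    have : ∀ i, ψ (r i • e' i) = (1 : L) ⊗ₜ[R] (r i • (⟨e' i, hmem i⟩ : N)) := by
      intro i
      rw [← algebraMap_smul L (r i) (e' i), map_smul, hψe', algebraMap_smul,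
        TensorProduct.tmul_smul]
    simp_rw [this]
    rw [← TensorProduct.tmul_sum, hsum]
  have hφψ : ∀ m : M, φ (ψ m) = m := by
    have : φ.comp ψ = LinearMap.id := by
      apply e'.ext
      intro i
      simp only [LinearMap.comp_apply, hψe', LinearMap.id_apply, hφdef,
        LinearMap.liftBaseChange_tmul, Submodule.subtype_apply, one_smul]
    intro m
    exact congrArg (fun f => f m) this ▸ (LinearMap.congr_fun this m)
  have hψφ : ∀ z : L ⊗[R] N, ψ (φ z) = z := by
    intro z
    induction z using TensorProduct.induction_on with
    | zero => simp
    | tmul l x =>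
      rw [hφdef]
      rw [LinearMap.liftBaseChange_tmul, map_smul, Submodule.subtype_apply,
        hψN x.1 x.2, TensorProduct.smul_tmul', smul_eq_mul, mul_one]
    | add a b ha hb => rw [map_add, map_add, ha, hb]
  constructor
  · exact Function.bijective_iff_has_inverse.mpr ⟨ψ, hψφ, hφψ⟩
  · exact ⟨e', hte'⟩
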